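/- Let B ∈ ℝ^{d×d} and let m, n be integers with 0 ≤ m < n ≤ d. Then for any s ∈ [m,n], φ^s(B) ≥ (φ^m(B))^{(n−s)/(n−m)} · (φ^n(B))^{(s−m)/(n−m)}. In particular, taking m = 0, φ^s(B) ≥ (φ^n(B))^{s/n} for 0 ≤ s ≤ n. -/

import Mathlib

open scoped BigOperators

noncomputable def svalList {n : Type*} [Fintype n] [DecidableEq n] (A : Matrix n n ℝ) : List ℝ :=
  ((Multiset.map (fun i => Real.sqrt ((show (A.transpose * A).IsHermitian by
      simpa using Matrix.isHermitian_conjTranspose_mul_self A).eigenvalues i))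
      Finset.univ.val).sort (· ≤ ·)).reverse

/-- `sval A j` is the `(j+1)`-th largest singular value `α_{j+1}(A)` (0-indexed). -/
noncomputable def sval {n : Type*} [Fintype n] [DecidableEq n] (A : Matrix n n ℝ) (j : ℕ) : ℝ :=
  (svalList A).getD j 0

/-- The singular value function `φ^s` (with `φ^s(A) = |det A|^{s/d}` for `s > d`). -/
noncomputable def phi {d : ℕ} (s : ℝ) (A : Matrix (Fin d) (Fin d) ℝ) : ℝ :=
  if s ≤ d then
    (∏ i ∈ Finset.range ⌊s⌋₊, sval A i) *
      (if ⌊s⌋₊ < d then sval A ⌊s⌋₊ ^ (s - ⌊s⌋₊) else 1)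
  else |A.det| ^ (s / (d : ℝ))

lemma svalList_sorted {n : Type*} [Fintype n] [DecidableEq n] (A : Matrix n n ℝ) :
    (svalList A).Pairwise (· ≥ ·) :=
  List.pairwise_reverse.mpr (Multiset.pairwise_sort _ (· ≤ ·))

lemma svalList_nonneg {n : Type*} [Fintype n] [DecidableEq n] (A : Matrix n n ℝ) :
    ∀ x ∈ svalList A, 0 ≤ x := by
  intro x hx
  unfold svalList at hx
  rw [List.mem_reverse, Multiset.mem_sort, Multiset.mem_map] at hx
  obtain ⟨i, _, rfl⟩ := hx
  exact Real.sqrt_nonneg _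

lemma sval_nonneg {n : Type*} [Fintype n] [DecidableEq n] (A : Matrix n n ℝ) (j : ℕ) :
    0 ≤ sval A j := by
  unfold sval
  by_cases hj : j < (svalList A).length
  · rw [List.getD_eq_getElem _ _ hj]
    exact svalList_nonneg A _ (List.getElem_mem hj)
  · rw [List.getD_eq_default _ _ (not_lt.1 hj)]

lemma sval_antitone {n : Type*} [Fintype n] [DecidableEq n] (A : Matrix n n ℝ)
    {j k : ℕ} (hjk : j ≤ k) : sval A k ≤ sval A j := by
  by_cases hk : k < (svalList A).length
  · have hj : j < (svalList A).length := lt_of_le_of_lt hjk hk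
    unfold sval
    rw [List.getD_eq_getElem _ _ hj, List.getD_eq_getElem _ _ hk]
    exact (svalList_sorted A).rel_get_of_le (a := ⟨j, hj⟩) (b := ⟨k, hk⟩) hjk
  · have h : sval A k = 0 := by
      unfold sval; rw [List.getD_eq_default _ _ (not_lt.1 hk)]
    rw [h]; exact sval_nonneg A j

lemma phi_nat_eq {d : ℕ} (A : Matrix (Fin d) (Fin d) ℝ) (k : ℕ) (hk : k ≤ d) :
    phi (k : ℝ) A = ∏ i ∈ Finset.range k, sval A i := by
  unfold phi
  rw [if_pos (by exact_mod_cast hk), Nat.floor_natCast, sub_self, Real.rpow_zero]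
  split_ifs <;> ring

lemma phi_interp_aux {d : ℕ} (B : Matrix (Fin d) (Fin d) ℝ)
    (m n : ℕ) (hmn : m < n) (hnd : n ≤ d) (s : ℝ) (hms : (m : ℝ) ≤ s) (hsn : s ≤ (n : ℝ)) :
    (phi (m : ℝ) B) ^ (((n : ℝ) - s) / ((n : ℝ) - (m : ℝ))) *
      (phi (n : ℝ) B) ^ ((s - (m : ℝ)) / ((n : ℝ) - (m : ℝ))) ≤ phi s B := by
  have hmn' : (m : ℝ) < (n : ℝ) := by exact_mod_cast hmn
  have hnm0 : (0 : ℝ) < (n : ℝ) - m := by linarith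
  rcases eq_or_lt_of_le hsn with rfl | hsn'
  · rw [sub_self, zero_div, Real.rpow_zero, one_mul, div_self (ne_of_gt hnm0), Real.rpow_one]
  set p := ⌊s⌋₊ with hp
  have hs0 : (0 : ℝ) ≤ s := le_trans (by positivity) hms
  have hps : (p : ℝ) ≤ s := Nat.floor_le hs0
  have hmp : m ≤ p := Nat.le_floor hms
  have hpn : p < n := by exact_mod_cast lt_of_le_of_lt hps hsn'
  have hpd : p < d := lt_of_lt_of_le hpn hnd
  have hsd : s ≤ (d : ℝ) := le_trans hsn'.le (by exact_mod_cast hnd)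
  have hphis : phi s B = (∏ i ∈ Finset.range p, sval B i) * sval B p ^ (s - p) := by
    unfold phi; rw [if_pos hsd, if_pos hpd]
  rw [phi_nat_eq B m (le_trans hmn.le hnd), phi_nat_eq B n hnd, hphis]
  by_cases hpos : ∀ i < n, 0 < sval B i
  · have hm_pos : 0 < ∏ i ∈ Finset.range m, sval B i :=
      Finset.prod_pos fun i hi => hpos i (lt_of_lt_of_le (Finset.mem_range.1 hi) hmn.le)
    have hn_pos : 0 < ∏ i ∈ Finset.range n, sval B i :=
      Finset.prod_pos fun i hi => hpos i (Finset.mem_range.1 hi)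
    have hp_pos : 0 < ∏ i ∈ Finset.range p, sval B i :=
      Finset.prod_pos fun i hi => hpos i (lt_trans (Finset.mem_range.1 hi) hpn)
    have hαp : 0 < sval B p := hpos p hpn
    have hrp : 0 < sval B p ^ (s - p) := Real.rpow_pos_of_pos hαp _
    rw [← Real.log_le_log_iff
        (mul_pos (Real.rpow_pos_of_pos hm_pos _) (Real.rpow_pos_of_pos hn_pos _))
        (mul_pos hp_pos hrp)]
    rw [Real.log_mul (ne_of_gt (Real.rpow_pos_of_pos hm_pos _))
        (ne_of_gt (Real.rpow_pos_of_pos hn_pos _)),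
      Real.log_rpow hm_pos, Real.log_rpow hn_pos,
      Real.log_mul (ne_of_gt hp_pos) (ne_of_gt hrp), Real.log_rpow hαp]
    have hlog : ∀ k, k ≤ n → Real.log (∏ i ∈ Finset.range k, sval B i)
        = ∑ i ∈ Finset.range k, Real.log (sval B i) := fun k hk =>
      Real.log_prod fun i hi =>
        ne_of_gt (hpos i (lt_of_lt_of_le (Finset.mem_range.1 hi) hk))
    rw [hlog m hmn.le, hlog n le_rfl, hlog p hpn.le]
    set L : ℕ → ℝ := fun i => Real.log (sval B i) with hL
    have hsplit1 : ∑ i ∈ Finset.range p, L i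
        = ∑ i ∈ Finset.range m, L i + ∑ i ∈ Finset.Ico m p, L i := by
      rw [Finset.range_eq_Ico, Finset.range_eq_Ico, Finset.sum_Ico_consecutive _ (Nat.zero_le m) hmp]
    have hsplit2 : ∑ i ∈ Finset.range n, L i
        = ∑ i ∈ Finset.range m, L i + ∑ i ∈ Finset.Ico m p, L i + ∑ i ∈ Finset.Ico p n, L i := by
      rw [Finset.range_eq_Ico, Finset.range_eq_Ico, add_assoc, Finset.sum_Ico_consecutive _ hmp hpn.le,
        Finset.sum_Ico_consecutive _ (Nat.zero_le m) (le_trans hmp hpn.le)]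
    have h1 : ((p : ℝ) - m) * L p ≤ ∑ i ∈ Finset.Ico m p, L i := by
      have := Finset.card_nsmul_le_sum (Finset.Ico m p) L (L p) fun i hi =>
        Real.log_le_log hαp (sval_antitone B (Finset.mem_Ico.1 hi).2.le)
      rwa [Nat.card_Ico, nsmul_eq_mul, Nat.cast_sub hmp] at this
    have h2 : ∑ i ∈ Finset.Ico p n, L i ≤ ((n : ℝ) - p) * L p := by
      have := Finset.sum_le_card_nsmul (Finset.Ico p n) L (L p) fun i hi =>
        Real.log_le_log (hpos i (Finset.mem_Ico.1 hi).2)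
          (sval_antitone B (Finset.mem_Ico.1 hi).1)
      rwa [Nat.card_Ico, nsmul_eq_mul, Nat.cast_sub hpn.le] at this
    rw [div_mul_eq_mul_div, div_mul_eq_mul_div, ← add_div, div_le_iff₀ hnm0,
      hsplit1, hsplit2]
    have key1 : 0 ≤ ((n : ℝ) - s) * ((∑ i ∈ Finset.Ico m p, L i) - ((p : ℝ) - m) * L p) :=
      mul_nonneg (by linarith) (by linarith)
    have key2 : 0 ≤ (s - (m : ℝ)) * (((n : ℝ) - p) * L p - ∑ i ∈ Finset.Ico p n, L i) :=
      mul_nonneg (by linarith) (by linarith)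
    nlinarith [key1, key2]
  · push_neg at hpos
    obtain ⟨i, hin, hi0⟩ := hpos
    have hi0' : sval B i = 0 := le_antisymm hi0 (sval_nonneg B i)
    have hn0 : (∏ i ∈ Finset.range n, sval B i) = 0 :=
      Finset.prod_eq_zero (Finset.mem_range.2 hin) hi0'
    rcases eq_or_lt_of_le hms with heq | hms'
    · have hpm : p = m := by rw [hp, ← heq, Nat.floor_natCast]
      rw [hn0, ← heq, hpm, sub_self, zero_div, Real.rpow_zero, mul_one,
        div_self (ne_of_gt hnm0), Real.rpow_one, Real.rpow_zero, mul_one]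
    · rw [hn0, Real.zero_rpow (ne_of_gt (div_pos (by linarith) hnm0)), mul_zero]
      exact mul_nonneg (Finset.prod_nonneg fun i _ => sval_nonneg B i)
        (Real.rpow_nonneg (sval_nonneg B p) _)

/-- Interpolation inequality for the singular value function: for integers
`0 ≤ m < n ≤ d` and `s ∈ [m,n]`,
`φ^s(B) ≥ (φ^m(B))^{(n−s)/(n−m)} (φ^n(B))^{(s−m)/(n−m)}`; in particular (taking `m = 0`)
`φ^s(B) ≥ (φ^n(B))^{s/n}` for all `s ∈ [0,n]`. -/
theorem phi_interpolation {d : ℕ} (B : Matrix (Fin d) (Fin d) ℝ)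
    (m n : ℕ) (hmn : m < n) (hnd : n ≤ d) :
    (∀ s : ℝ, (m : ℝ) ≤ s → s ≤ (n : ℝ) →
      (phi (m : ℝ) B) ^ (((n : ℝ) - s) / ((n : ℝ) - (m : ℝ))) *
        (phi (n : ℝ) B) ^ ((s - (m : ℝ)) / ((n : ℝ) - (m : ℝ))) ≤ phi s B) ∧
    (∀ s : ℝ, 0 ≤ s → s ≤ (n : ℝ) → (phi (n : ℝ) B) ^ (s / (n : ℝ)) ≤ phi s B) := by
  constructor
  · exact fun s h1 h2 => phi_interp_aux B m n hmn hnd s h1 h2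
  · intro s h0 hsn
    have h := phi_interp_aux B 0 n (lt_of_le_of_lt (Nat.zero_le m) hmn) hnd s
      (by simpa using h0) hsn
    have hphi0 : phi ((0 : ℕ) : ℝ) B = 1 := by
      rw [phi_nat_eq B 0 (Nat.zero_le d)]; simp
    rw [hphi0, Real.one_rpow, one_mul] at h
    simpa using h
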